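/- Let f : [a,b] → ℝ be C¹ with |f(a)| > δ, |f(b)| > δ, and |f(t)| + |f'(t)| > δ for all t ∈ [a,b], for some δ > 0. Then the number of zeros of f in [a,b] equals (1/(2δ')) ∫_a^b |f'(t)| 1_{|f(t)| < δ'} dt for every 0 < δ' ≤ δ — in particular all zeros of f in [a,b] are simple and finite in number. -/

import Mathlib

open MeasureTheory Set

namespace Stmt16Aux

/-- Left endpoint of the connected component of `{|f| < δ'}` containing `t`. -/
noncomputable def cpt (f : ℝ → ℝ) (a δ' t : ℝ) : ℝ := sSup {s | s ∈ Icc a t ∧ δ' ≤ |f s|}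

/-- Right endpoint of the connected component of `{|f| < δ'}` containing `t`. -/
noncomputable def dpt (f : ℝ → ℝ) (b δ' t : ℝ) : ℝ := sInf {s | s ∈ Icc t b ∧ δ' ≤ |f s|}

variable {a b δ δ' : ℝ} {f : ℝ → ℝ}

lemma exists_comp (hδ : 0 < δ) (hδ' : 0 < δ') (hδ'δ : δ' ≤ δ)
    (hcont : ContinuousOn f (Icc a b))
    (ha : δ < |f a|) (hb : δ < |f b|)
    {t : ℝ} (ht : t ∈ Icc a b) (hft : |f t| < δ') :
    a < cpt f a δ' t ∧ cpt f a δ' t < t ∧ t < dpt f b δ' t ∧ dpt f b δ' t < b ∧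
    |f (cpt f a δ' t)| = δ' ∧ |f (dpt f b δ' t)| = δ' ∧
    ∀ s ∈ Ioo (cpt f a δ' t) (dpt f b δ' t), |f s| < δ' := by
  have haδ' : δ' ≤ |f a| := le_trans hδ'δ ha.le
  have hbδ' : δ' ≤ |f b| := le_trans hδ'δ hb.le
  -- the left side
  set A : Set ℝ := {s | s ∈ Icc a t ∧ δ' ≤ |f s|} with hA
  have hAne : A.Nonempty := ⟨a, ⟨le_rfl, ht.1⟩, haδ'⟩
  have hAbdd : BddAbove A := ⟨t, fun s hs => hs.1.2⟩
  have hAclosed : IsClosed A := by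
    have h1 : ContinuousOn (fun s => |f s|) (Icc a t) :=
      (hcont.mono (Icc_subset_Icc_right ht.2)).abs
    have := h1.preimage_isClosed_of_isClosed isClosed_Icc (isClosed_Ici (a := δ'))
    convert this using 1
    rfl
  set c : ℝ := cpt f a δ' t with hc
  have hcA : c ∈ A := hAclosed.csSup_mem hAne hAbdd
  have hct : c ≤ t := csSup_le hAne fun s hs => hs.1.2
  have hct' : c < t := lt_of_le_of_ne hct (by
    intro h
    rw [h] at hcA
    exact absurd hcA.2 (not_le.2 hft))
  have hIoc : ∀ s ∈ Ioc c t, |f s| < δ' := by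
    intro s hs
    by_contra h
    push_neg at h
    exact absurd (le_csSup hAbdd ⟨⟨le_trans hcA.1.1 hs.1.le, hs.2⟩, h⟩) (not_le.2 hs.1)
  have hfcle : |f c| ≤ δ' := by
    have hmem : c ∈ closure (Ioc c t) := by
      rw [closure_Ioc hct'.ne]
      exact ⟨le_rfl, hct⟩
    have hNB : (nhdsWithin c (Ioc c t)).NeBot := mem_closure_iff_nhdsWithin_neBot.1 hmem
    have hcw : ContinuousWithinAt (fun s => |f s|) (Ioc c t) c := by
      have : ContinuousWithinAt f (Icc a b) c := hcont c ⟨hcA.1.1, le_trans hct ht.2⟩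
      exact (this.mono fun s hs => ⟨le_trans hcA.1.1 hs.1.le, le_trans hs.2 ht.2⟩).abs
    exact le_of_tendsto hcw (Filter.eventually_of_mem self_mem_nhdsWithin
      fun s hs => (hIoc s hs).le)
  have hfc : |f c| = δ' := le_antisymm hfcle hcA.2
  have hac : a < c := lt_of_le_of_ne hcA.1.1 (by
    intro h
    rw [← h] at hfc
    exact absurd hfc.le (not_le.2 (lt_of_le_of_lt hδ'δ ha)))
  -- the right side
  set B : Set ℝ := {s | s ∈ Icc t b ∧ δ' ≤ |f s|} with hB
  have hBne : B.Nonempty := ⟨b, ⟨ht.2, le_rfl⟩, hbδ'⟩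
  have hBbdd : BddBelow B := ⟨t, fun s hs => hs.1.1⟩
  have hBclosed : IsClosed B := by
    have h1 : ContinuousOn (fun s => |f s|) (Icc t b) :=
      (hcont.mono (Icc_subset_Icc_left ht.1)).abs
    have := h1.preimage_isClosed_of_isClosed isClosed_Icc (isClosed_Ici (a := δ'))
    convert this using 1
    rfl
  set d : ℝ := dpt f b δ' t with hd
  have hdB : d ∈ B := hBclosed.csInf_mem hBne hBbdd
  have htd : t ≤ d := le_csInf hBne fun s hs => hs.1.1
  have htd' : t < d := lt_of_le_of_ne (by exact htd) (by
    intro h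
    rw [← h] at hdB
    exact absurd hdB.2 (not_le.2 hft))
  have hIco : ∀ s ∈ Ico t d, |f s| < δ' := by
    intro s hs
    by_contra h
    push_neg at h
    exact absurd (csInf_le hBbdd ⟨⟨hs.1, le_trans hs.2.le hdB.1.2⟩, h⟩) (not_le.2 hs.2)
  have hfdle : |f d| ≤ δ' := by
    have hmem : d ∈ closure (Ico t d) := by
      rw [closure_Ico htd'.ne]
      exact ⟨htd, le_rfl⟩
    have hNB : (nhdsWithin d (Ico t d)).NeBot := mem_closure_iff_nhdsWithin_neBot.1 hmem
    have hcw : ContinuousWithinAt (fun s => |f s|) (Ico t d) d := by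
      have : ContinuousWithinAt f (Icc a b) d := hcont d ⟨le_trans ht.1 htd, hdB.1.2⟩
      exact (this.mono fun s hs => ⟨le_trans ht.1 hs.1, le_trans hs.2.le hdB.1.2⟩).abs
    exact le_of_tendsto hcw (Filter.eventually_of_mem self_mem_nhdsWithin
      fun s hs => (hIco s hs).le)
  have hfd : |f d| = δ' := le_antisymm hfdle hdB.2
  have hdb : d < b := lt_of_le_of_ne hdB.1.2 (by
    intro h
    rw [h] at hfd
    exact absurd hfd.le (not_le.2 (lt_of_le_of_lt hδ'δ hb)))
  refine ⟨hac, hct', htd', hdb, hfc, hfd, ?_⟩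
  intro s hs
  rcases le_or_gt s t with h | h
  · exact hIoc s ⟨hs.1, h⟩
  · exact hIco s ⟨h.le, hs.2⟩

lemma cpt_dpt_eq (hδ : 0 < δ) (hδ' : 0 < δ') (hδ'δ : δ' ≤ δ)
    (hcont : ContinuousOn f (Icc a b))
    (ha : δ < |f a|) (hb : δ < |f b|)
    {t : ℝ} (ht : t ∈ Icc a b) (hft : |f t| < δ')
    {u : ℝ} (hu : u ∈ Ioo (cpt f a δ' t) (dpt f b δ' t)) :
    cpt f a δ' u = cpt f a δ' t ∧ dpt f b δ' u = dpt f b δ' t := by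
  obtain ⟨hac, hct, htd, hdb, hfc, hfd, hin⟩ :=
    exists_comp hδ hδ' hδ'δ hcont ha hb ht hft
  have hfu : |f u| < δ' := hin u hu
  have hu' : u ∈ Icc a b := ⟨le_trans hac.le hu.1.le, le_trans hu.2.le hdb.le⟩
  obtain ⟨huac, huct, hutd, hudb, hufc, hufd, huin⟩ :=
    exists_comp hδ hδ' hδ'δ hcont ha hb hu' hfu
  constructor
  · -- cpt u = cpt t
    have hbddu : BddAbove {s | s ∈ Icc a u ∧ δ' ≤ |f s|} := ⟨u, fun s hs => hs.1.2⟩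
    have h1 : cpt f a δ' t ≤ cpt f a δ' u :=
      le_csSup hbddu ⟨⟨hac.le, hu.1.le⟩, hfc.symm.le⟩
    rcases h1.eq_or_lt with h | h
    · exact h.symm
    · exfalso
      have hmem : cpt f a δ' u ∈ Ioo (cpt f a δ' t) (dpt f b δ' t) :=
        ⟨h, lt_trans huct hu.2⟩
      exact absurd (hin _ hmem) (not_lt.2 hufc.symm.le)
  · -- dpt u = dpt t
    have hbddu : BddBelow {s | s ∈ Icc u b ∧ δ' ≤ |f s|} := ⟨u, fun s hs => hs.1.1⟩
    have h1 : dpt f b δ' u ≤ dpt f b δ' t :=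
      csInf_le hbddu ⟨⟨hu.2.le, hdb.le⟩, hfd.symm.le⟩
    rcases h1.eq_or_lt with h | h
    · exact h
    · exfalso
      have hmem : dpt f b δ' u ∈ Ioo (cpt f a δ' t) (dpt f b δ' t) :=
        ⟨lt_trans hu.1 hutd, h⟩
      exact absurd (hin _ hmem) (not_lt.2 hufd.symm.le)

lemma comp_props (hab : a < b) (hδ : 0 < δ) (hδ' : 0 < δ') (hδ'δ : δ' ≤ δ)
    (hf : ContDiffOn ℝ 1 f (Icc a b))
    (hnd : ∀ t ∈ Icc a b, δ < |f t| + |derivWithin f (Icc a b) t|)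
    {c d : ℝ} (hac : a < c) (hcd : c < d) (hdb : d < b)
    (hfc : |f c| = δ') (hfd : |f d| = δ') (hin : ∀ s ∈ Ioo c d, |f s| < δ') :
    (∀ z₁ ∈ Icc c d, ∀ z₂ ∈ Icc c d, f z₁ = 0 → f z₂ = 0 → z₁ = z₂) ∧
    (∃ z ∈ Ioo c d, f z = 0) ∧
    ∫ s in Ioo c d, |derivWithin f (Icc a b) s| = 2 * δ' := by
  set g : ℝ → ℝ := derivWithin f (Icc a b) with hg
  have hcont : ContinuousOn f (Icc a b) := hf.continuousOn
  have gcont : ContinuousOn g (Icc a b) :=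
    hf.continuousOn_derivWithin (uniqueDiffOn_Icc hab) le_rfl
  have hsub : Icc c d ⊆ Icc a b := Icc_subset_Icc hac.le hdb.le
  have hsub' : Icc c d ⊆ Ioo a b := fun s hs =>
    ⟨lt_of_lt_of_le hac hs.1, lt_of_le_of_lt hs.2 hdb⟩
  have hsubIoo : Ioo c d ⊆ Ioo a b := fun s hs => hsub' (Ioo_subset_Icc_self hs)
  have hg0 : ∀ s ∈ Ioo c d, g s ≠ 0 := by
    intro s hs h0
    have h1 := hnd s (hsub (Ioo_subset_Icc_self hs))
    rw [h0] at h1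
    simp only [abs_zero, add_zero] at h1
    exact absurd (hin s hs) (not_lt.2 (le_trans hδ'δ h1.le))
  have hHD : ∀ x ∈ Ioo a b, HasDerivAt f (g x) x := by
    intro x hx
    have hmem : Icc a b ∈ nhds x := Icc_mem_nhds hx.1 hx.2
    have hdiff : DifferentiableAt ℝ f x :=
      ((hf.differentiableOn one_ne_zero) x (Ioo_subset_Icc_self hx)).differentiableAt hmem
    have heq : g x = deriv f x := derivWithin_of_mem_nhds hmem
    rw [heq]
    exact hdiff.hasDerivAt
  have hdeq : ∀ x ∈ Ioo a b, deriv f x = g x := fun x hx =>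
    (derivWithin_of_mem_nhds (Icc_mem_nhds hx.1 hx.2)).symm
  have hsign : (∀ s ∈ Ioo c d, 0 < g s) ∨ (∀ s ∈ Ioo c d, g s < 0) := by
    by_contra h
    push_neg at h
    obtain ⟨⟨s₁, hs₁, hg₁⟩, ⟨s₂, hs₂, hg₂⟩⟩ := h
    have hg₁' : g s₁ ≤ 0 := hg₁
    have hg₂' : 0 ≤ g s₂ := hg₂
    have hgc : ContinuousOn g (uIcc s₁ s₂) :=
      gcont.mono (le_trans (ordConnected_Ioo.uIcc_subset hs₁ hs₂)
        (le_trans Ioo_subset_Icc_self hsub))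
    have h0 : (0 : ℝ) ∈ uIcc (g s₁) (g s₂) := by
      rw [mem_uIcc]
      left; exact ⟨hg₁', hg₂'⟩
    obtain ⟨x, hx, hgx⟩ := intermediate_value_uIcc hgc h0
    exact hg0 x (ordConnected_Ioo.uIcc_subset hs₁ hs₂ hx) hgx
  have hcdIcc : c ∈ Icc c d := left_mem_Icc.2 hcd.le
  have hdIcc : d ∈ Icc c d := right_mem_Icc.2 hcd.le
  have hs₀ : (c + d) / 2 ∈ Ioo c d := ⟨by linarith, by linarith⟩
  have habs₀ := abs_lt.1 (hin _ hs₀)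
  have hint : IntervalIntegrable g volume c d := by
    apply ContinuousOn.intervalIntegrable
    rw [uIcc_of_le hcd.le]
    exact gcont.mono hsub
  have hFTC : ∫ s in c..d, g s = f d - f c := by
    apply intervalIntegral.integral_eq_sub_of_hasDerivAt _ hint
    intro x hx
    rw [uIcc_of_le hcd.le] at hx
    exact hHD x (hsub' hx)
  rcases hsign with hpos | hneg
  · -- increasing case
    have hmono : StrictMonoOn f (Icc c d) := by
      apply strictMonoOn_of_deriv_pos (convex_Icc c d) (hcont.mono hsub)
      intro x hx
      rw [interior_Icc] at hx
      rw [hdeq x (hsubIoo hx)]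
      exact hpos x hx
    have h1 : f c < f ((c + d) / 2) := hmono hcdIcc (Ioo_subset_Icc_self hs₀) hs₀.1
    have h2 : f ((c + d) / 2) < f d := hmono (Ioo_subset_Icc_self hs₀) hdIcc hs₀.2
    have hfc' : f c = -δ' := by
      rcases (abs_eq hδ'.le).1 hfc with h | h
      · linarith
      · exact h
    have hfd' : f d = δ' := by
      rcases (abs_eq hδ'.le).1 hfd with h | h
      · exact h
      · linarith
    refine ⟨fun z₁ h₁ z₂ h₂ e₁ e₂ => hmono.injOn h₁ h₂ (by rw [e₁, e₂]), ?_, ?_⟩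
    · have h0 : (0 : ℝ) ∈ Ioo (f c) (f d) := by
        rw [hfc', hfd']; exact ⟨by linarith, hδ'⟩
      obtain ⟨z, hz, hfz⟩ := intermediate_value_Ioo hcd.le (hcont.mono hsub) h0
      exact ⟨z, hz, hfz⟩
    · have heq : ∫ s in Ioo c d, |g s| = ∫ s in Ioo c d, g s :=
        setIntegral_congr_fun measurableSet_Ioo fun s hs => abs_of_pos (hpos s hs)
      rw [heq, ← integral_Ioc_eq_integral_Ioo, ← intervalIntegral.integral_of_le hcd.le,
        hFTC, hfc', hfd']
      ring
  · -- decreasing case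
    have hmono : StrictAntiOn f (Icc c d) := by
      apply strictAntiOn_of_deriv_neg (convex_Icc c d) (hcont.mono hsub)
      intro x hx
      rw [interior_Icc] at hx
      rw [hdeq x (hsubIoo hx)]
      exact hneg x hx
    have h1 : f ((c + d) / 2) < f c := hmono hcdIcc (Ioo_subset_Icc_self hs₀) hs₀.1
    have h2 : f d < f ((c + d) / 2) := hmono (Ioo_subset_Icc_self hs₀) hdIcc hs₀.2
    have hfc' : f c = δ' := by
      rcases (abs_eq hδ'.le).1 hfc with h | h
      · exact h
      · linarith
    have hfd' : f d = -δ' := by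
      rcases (abs_eq hδ'.le).1 hfd with h | h
      · linarith
      · exact h
    refine ⟨fun z₁ h₁ z₂ h₂ e₁ e₂ => hmono.injOn h₁ h₂ (by rw [e₁, e₂]), ?_, ?_⟩
    · have h0 : (0 : ℝ) ∈ Ioo (f d) (f c) := by
        rw [hfc', hfd']; exact ⟨by linarith, hδ'⟩
      obtain ⟨z, hz, hfz⟩ := intermediate_value_Ioo' hcd.le (hcont.mono hsub) h0
      exact ⟨z, hz, hfz⟩
    · have heq : ∫ s in Ioo c d, |g s| = ∫ s in Ioo c d, -g s :=
        setIntegral_congr_fun measurableSet_Ioo fun s hs => abs_of_neg (hneg s hs)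
      rw [heq, integral_neg, ← integral_Ioc_eq_integral_Ioo,
        ← intervalIntegral.integral_of_le hcd.le, hFTC, hfc', hfd']
      ring

end Stmt16Aux

open Stmt16Aux

/-- Approximate Kac–Rice counting formula: if `f` is `C¹` on `[a,b]`, with `|f| > δ` at the
endpoints and `|f(t)| + |f'(t)| > δ` on `[a,b]`, then the zeros of `f` in `[a,b]` are
finitely many and simple, and for every `0 < δ' ≤ δ` their number equals
`(1/(2δ')) ∫_a^b |f'(t)| 1_{|f(t)| < δ'} dt`. -/
theorem stmt16 (a b : ℝ) (hab : a ≤ b) (f : ℝ → ℝ) (δ : ℝ) (hδ : 0 < δ)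
    (hf : ContDiffOn ℝ 1 f (Set.Icc a b))
    (ha : δ < |f a|) (hb : δ < |f b|)
    (hnd : ∀ t ∈ Set.Icc a b, δ < |f t| + |derivWithin f (Set.Icc a b) t|) :
    {t ∈ Set.Icc a b | f t = 0}.Finite ∧
    (∀ t ∈ Set.Icc a b, f t = 0 → derivWithin f (Set.Icc a b) t ≠ 0) ∧
    ∀ δ' : ℝ, 0 < δ' → δ' ≤ δ →
      ({t ∈ Set.Icc a b | f t = 0}.ncard : ℝ)
        = (1 / (2 * δ')) *
            ∫ t in a..b, |derivWithin f (Set.Icc a b) t| * (if |f t| < δ' then 1 else 0) := by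
  have hfa0 : f a ≠ 0 := by
    intro h; rw [h] at ha; simp at ha; linarith
  have hfb0 : f b ≠ 0 := by
    intro h; rw [h] at hb; simp at hb; linarith
  rcases hab.eq_or_lt with heq | hlt
  · -- degenerate case a = b
    subst heq
    have hZ : {t ∈ Icc a a | f t = 0} = ∅ := by
      ext t
      simp only [mem_setOf_eq, mem_empty_iff_false, iff_false, not_and, Icc_self,
        mem_singleton_iff]
      rintro rfl
      exact hfa0
    refine ⟨by rw [hZ]; exact finite_empty, ?_, ?_⟩
    · intro t ht hft
      rw [Icc_self, mem_singleton_iff] at ht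
      subst ht
      exact absurd hft hfa0
    · intro δ' h1 h2
      rw [hZ, intervalIntegral.integral_same]
      simp
  -- main case a < b
  set g : ℝ → ℝ := derivWithin f (Set.Icc a b) with hg
  set Z : Set ℝ := {t ∈ Set.Icc a b | f t = 0} with hZdef
  have hcont : ContinuousOn f (Icc a b) := hf.continuousOn
  have gcont : ContinuousOn g (Icc a b) :=
    hf.continuousOn_derivWithin (uniqueDiffOn_Icc hlt) le_rfl
  have hZsub : Z ⊆ Icc a b := fun t ht => ht.1
  have hZIoo : ∀ z ∈ Z, z ∈ Ioo a b := by
    rintro z ⟨hz, hz0⟩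
    refine ⟨lt_of_le_of_ne hz.1 ?_, lt_of_le_of_ne hz.2 ?_⟩
    · rintro rfl; exact hfa0 hz0
    · rintro rfl; exact hfb0 hz0
  have hZabs : ∀ δ', 0 < δ' → ∀ z ∈ Z, |f z| < δ' := by
    rintro δ' hδ' z ⟨hz, hz0⟩
    rw [hz0]; simpa using hδ'
  -- the key structure for a given δ'
  have key : ∀ δ', 0 < δ' → δ' ≤ δ → ∀ z ∈ Z,
      a < cpt f a δ' z ∧ cpt f a δ' z < z ∧ z < dpt f b δ' z ∧ dpt f b δ' z < b ∧
      (∀ z₁ ∈ Icc (cpt f a δ' z) (dpt f b δ' z), ∀ z₂ ∈ Icc (cpt f a δ' z) (dpt f b δ' z),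
        f z₁ = 0 → f z₂ = 0 → z₁ = z₂) ∧
      (∀ s ∈ Ioo (cpt f a δ' z) (dpt f b δ' z), |f s| < δ') ∧
      ∫ s in Ioo (cpt f a δ' z) (dpt f b δ' z), |g s| = 2 * δ' := by
    intro δ' hδ' hδ'δ z hz
    obtain ⟨hac, hcz, hzd, hdb, hfc, hfd, hin⟩ :=
      exists_comp hδ hδ' hδ'δ hcont ha hb (hZsub hz) (hZabs δ' hδ' z hz)
    obtain ⟨huniq, _, hintegral⟩ :=
      comp_props hlt hδ hδ' hδ'δ hf hnd hac (lt_trans hcz hzd) hdb hfc hfd hin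
    exact ⟨hac, hcz, hzd, hdb, huniq, hin, hintegral⟩
  -- finiteness, via a finite subcover at level δ' = δ
  have hZclosed : IsClosed Z := by
    have : Z = Icc a b ∩ f ⁻¹' {0} := by
      ext t; simp [hZdef]
    rw [this]
    exact hcont.preimage_isClosed_of_isClosed isClosed_Icc isClosed_singleton
  have hZcomp : IsCompact Z := isCompact_Icc.of_isClosed_subset hZclosed hZsub
  have hZfin : Z.Finite := by
    have hcover : Z ⊆ ⋃ z ∈ Z, Ioo (cpt f a δ z) (dpt f b δ z) := by
      intro z hz
      obtain ⟨hac, hcz, hzd, hdb, _, _, _⟩ := key δ hδ le_rfl z hz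
      exact mem_biUnion hz ⟨hcz, hzd⟩
    obtain ⟨T, hTsub, hTfin, hTcover⟩ :=
      hZcomp.elim_finite_subcover_image (fun z _ => isOpen_Ioo) hcover
    apply hTfin.subset
    intro z hz
    obtain ⟨w, hw, hzw⟩ := mem_iUnion₂.1 (hTcover hz)
    obtain ⟨hac, hcw, hwd, hdb, huniq, _, _⟩ := key δ hδ le_rfl w (hTsub hw)
    have : z = w := huniq z (Ioo_subset_Icc_self hzw) w ⟨hcw.le, hwd.le⟩ hz.2
      ((hTsub hw).2)
    rwa [this]
  refine ⟨hZfin, ?_, ?_⟩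
  · -- simple zeros
    intro t ht h0 hgt
    have := hnd t ht
    rw [h0, hgt] at this
    simp at this
    linarith
  -- the counting formula
  intro δ' hδ' hδ'δ
  set F : Finset ℝ := hZfin.toFinset with hF
  have hFZ : ∀ z ∈ F, z ∈ Z := fun z hz => hZfin.mem_toFinset.1 hz
  set S : Set ℝ := {t | t ∈ Icc a b ∧ |f t| < δ'} with hS
  have hSeq : S = ⋃ z ∈ F, Ioo (cpt f a δ' z) (dpt f b δ' z) := by
    ext t
    simp only [hS, mem_setOf_eq, mem_iUnion, exists_prop]
    constructor
    · rintro ⟨ht, hft⟩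
      obtain ⟨hac, hct, htd, hdb, hfc, hfd, hin⟩ :=
        exists_comp hδ hδ' hδ'δ hcont ha hb ht hft
      obtain ⟨_, ⟨z, hz, hfz⟩, _⟩ :=
        comp_props hlt hδ hδ' hδ'δ hf hnd hac (lt_trans hct htd) hdb hfc hfd hin
      have hzZ : z ∈ Z := ⟨⟨le_trans hac.le hz.1.le, le_trans hz.2.le hdb.le⟩, hfz⟩
      obtain ⟨hce, hde⟩ := cpt_dpt_eq hδ hδ' hδ'δ hcont ha hb ht hft hz
      refine ⟨z, hZfin.mem_toFinset.2 hzZ, ?_⟩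
      rw [show cpt f a δ' z = cpt f a δ' t from hce, show dpt f b δ' z = dpt f b δ' t from hde]
      exact ⟨hct, htd⟩
    · rintro ⟨z, hz, hzt⟩
      obtain ⟨hac, hcz, hzd, hdb, _, hin, _⟩ := key δ' hδ' hδ'δ z (hFZ z hz)
      exact ⟨⟨le_trans hac.le hzt.1.le, le_trans hzt.2.le hdb.le⟩, hin t hzt⟩
  have hSmeas : MeasurableSet S := by
    rw [hSeq]
    exact F.measurableSet_biUnion fun z _ => measurableSet_Ioo
  have hSsub : S ⊆ Ioc a b := by
    rintro t ⟨ht, hft⟩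
    refine ⟨lt_of_le_of_ne ht.1 ?_, ht.2⟩
    rintro rfl
    exact absurd hft (not_lt.2 (le_trans hδ'δ ha.le))
  -- disjointness
  have hdisj : (↑F : Set ℝ).Pairwise (Function.onFun Disjoint fun z => Ioo (cpt f a δ' z) (dpt f b δ' z)) := by
    intro z₁ hz₁ z₂ hz₂ hne
    have hz₁Z : z₁ ∈ Z := hFZ z₁ (by exact_mod_cast hz₁)
    have hz₂Z : z₂ ∈ Z := hFZ z₂ (by exact_mod_cast hz₂)
    rw [Function.onFun, Set.disjoint_left]
    intro t ht₁ ht₂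
    obtain ⟨hac₁, hcz₁, hzd₁, hdb₁, huniq₁, hin₁, _⟩ := key δ' hδ' hδ'δ z₁ hz₁Z
    obtain ⟨hac₂, hcz₂, hzd₂, hdb₂, huniq₂, hin₂, _⟩ := key δ' hδ' hδ'δ z₂ hz₂Z
    obtain ⟨hce₁, hde₁⟩ := cpt_dpt_eq hδ hδ' hδ'δ hcont ha hb (hZsub hz₁Z)
      (hZabs δ' hδ' z₁ hz₁Z) ht₁
    obtain ⟨hce₂, hde₂⟩ := cpt_dpt_eq hδ hδ' hδ'δ hcont ha hb (hZsub hz₂Z)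
      (hZabs δ' hδ' z₂ hz₂Z) ht₂
    -- the two intervals coincide
    have hceq : cpt f a δ' z₁ = cpt f a δ' z₂ := by rw [← hce₁, hce₂]
    have hdeq : dpt f b δ' z₁ = dpt f b δ' z₂ := by rw [← hde₁, hde₂]
    apply hne
    apply huniq₁ z₁ ⟨hcz₁.le, hzd₁.le⟩ z₂ _ hz₁Z.2 hz₂Z.2
    rw [hceq, hdeq]
    exact ⟨hcz₂.le, hzd₂.le⟩
  have habs_int : IntegrableOn (fun s => |g s|) (Icc a b) := gcont.abs.integrableOn_Icc
  have hcard : (Z.ncard : ℝ) = (F.card : ℝ) := by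
    rw [Set.ncard_eq_toFinset_card Z hZfin]
  have hmain : ∫ t in a..b, |g t| * (if |f t| < δ' then 1 else 0)
      = (Z.ncard : ℝ) * (2 * δ') := by
    rw [intervalIntegral.integral_of_le hab]
    have hstep1 : ∫ t in Ioc a b, |g t| * (if |f t| < δ' then 1 else 0)
        = ∫ t in Ioc a b, S.indicator (fun t => |g t|) t := by
      apply setIntegral_congr_fun measurableSet_Ioc
      intro t ht
      by_cases hft : |f t| < δ'
      · have htS : t ∈ S := ⟨Ioc_subset_Icc_self ht, hft⟩
        simp only [if_pos hft, indicator_of_mem htS, mul_one]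
      · have htS : t ∉ S := fun h => hft h.2
        simp only [if_neg hft, indicator_of_notMem htS, mul_zero]
    rw [hstep1, setIntegral_indicator hSmeas, inter_eq_self_of_subset_right hSsub, hSeq]
    rw [integral_biUnion_finset F (fun z _ => measurableSet_Ioo) hdisj
      (fun z hz => by
        apply habs_int.mono_set
        obtain ⟨hac, hcz, hzd, hdb, _, _, _⟩ := key δ' hδ' hδ'δ z (hFZ z hz)
        exact fun s hs => ⟨le_trans hac.le hs.1.le, le_trans hs.2.le hdb.le⟩)]
    rw [Finset.sum_congr rfl (fun z hz => (key δ' hδ' hδ'δ z (hFZ z hz)).2.2.2.2.2.2)]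
    rw [Finset.sum_const, hcard]
    simp [mul_comm]
  rw [hmain]
  field_simp
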